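/- Let S ∈ ℝ^{d×l} have orthonormal columns, and let A ∈ ℝ^{l×d} be such that AᵀA is a diagonal 0/1 projection (mask) matrix and M := Sᵀ Aᵀ A S = (AS)ᵀ(AS) is positive definite. Fix x₀ = S z₀ and define the gluing objective G(z) = ‖z − Sᵀ(AᵀA x₀ + (I_d − AᵀA) S z)‖²₂. Then G(z) = ‖M(z − z₀)‖²₂, and consequently z₀ is the unique global minimizer of G with G(z₀) = 0. -/

import Mathlib

open Matrix

/-- The gluing objective equals `‖M(z − z₀)‖²` with `M = SᵀAᵀAS`, hence `z₀` is its
unique global minimizer with value `0`. -/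
theorem gluing_objective_unique_minimizer {d l : ℕ}
    (S : Matrix (Fin d) (Fin l) ℝ) (hS : Sᵀ * S = 1)
    (A : Matrix (Fin l) (Fin d) ℝ)
    (m : Fin d → ℝ) (hm : ∀ i, m i = 0 ∨ m i = 1) (hmask : Aᵀ * A = Matrix.diagonal m)
    (hMpos : (Sᵀ * Aᵀ * A * S).PosDef)
    (z₀ : Fin l → ℝ) (x₀ : Fin d → ℝ) (hx₀ : x₀ = S.mulVec z₀)
    (G : (Fin l → ℝ) → ℝ)
    (hG : ∀ z, G z = ∑ i, (z i -
      Sᵀ.mulVec ((Aᵀ * A).mulVec x₀ + ((1 : Matrix (Fin d) (Fin d) ℝ) - Aᵀ * A).mulVec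
        (S.mulVec z)) i) ^ 2) :
    (∀ z, G z = ∑ i, ((Sᵀ * Aᵀ * A * S).mulVec (z - z₀) i) ^ 2) ∧
    G z₀ = 0 ∧ (∀ z, z ≠ z₀ → G z₀ < G z) := by
  set M := Sᵀ * Aᵀ * A * S with hM
  have hvec : ∀ z : Fin l → ℝ,
      (fun i => z i - Sᵀ.mulVec ((Aᵀ * A).mulVec x₀ +
        ((1 : Matrix (Fin d) (Fin d) ℝ) - Aᵀ * A).mulVec (S.mulVec z)) i)
      = M.mulVec (z - z₀) := by
    intro z
    subst hx₀
    have e1 : Sᵀ.mulVec (S.mulVec z) = z := by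
      rw [Matrix.mulVec_mulVec, hS, Matrix.one_mulVec]
    show z - Sᵀ.mulVec _ = M.mulVec (z - z₀)
    rw [Matrix.mulVec_add, Matrix.sub_mulVec, Matrix.one_mulVec, Matrix.mulVec_sub,
      Matrix.mulVec_sub, e1]
    simp only [Matrix.mulVec_mulVec, hM, Matrix.mul_assoc]
    abel
  have hGeq : ∀ z, G z = ∑ i, (M.mulVec (z - z₀) i) ^ 2 := by
    intro z
    rw [hG z]
    exact Finset.sum_congr rfl fun i _ => by rw [← hvec z]
  refine ⟨hGeq, ?_, ?_⟩
  · rw [hGeq]; simp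
  · intro z hz
    rw [hGeq, hGeq]
    simp only [sub_self, Matrix.mulVec_zero, Pi.zero_apply]
    have hv : z - z₀ ≠ 0 := sub_ne_zero.mpr hz
    have hMv : M.mulVec (z - z₀) ≠ 0 := by
      intro h
      have := hMpos.dotProduct_mulVec_pos hv
      rw [h] at this
      simp at this
    obtain ⟨i, hi⟩ := Function.ne_iff.mp hMv
    have : (0:ℝ) < ∑ i, (M.mulVec (z - z₀) i) ^ 2 := by
      apply Finset.sum_pos' (fun j _ => sq_nonneg _)
      exact ⟨i, Finset.mem_univ i, lt_of_le_of_ne (sq_nonneg _) (Ne.symm (pow_ne_zero 2 hi))⟩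
    simpa using this
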